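/- Let C be a channel from a finite nonempty type X to a finite nonempty type Y all of whose entries are strictly positive. Then the lift capacity of C, i.e. the supremum over all full-support priors π on X of Lift(π, C), equals the maximum over all x, x' ∈ X and y ∈ Y of C x y / C x' y. Equivalently, MaxLift(C) = e^ε where ε is the (smallest) local differential privacy parameter of C. -/

import Mathlib

open Finset

variable {X Y W : Type*}

/-- Output marginal p(y) = ∑_x π x * C x y. -/
noncomputable def marginal [Fintype X] (π : X → ℝ) (C : X → Y → ℝ) (y : Y) : ℝ :=
  ∑ x, π x * C x y

/-- Lift(π, C): max over pairs (x, y) with π x * C x y > 0 of C x y / p(y). -/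
noncomputable def Lift [Fintype X] (π : X → ℝ) (C : X → Y → ℝ) : ℝ :=
  sSup {r : ℝ | ∃ x y, 0 < π x * C x y ∧ r = C x y / marginal π C y}

/-- Lift capacity: the sup over all full-support priors π of Lift(π, C). -/
noncomputable def MaxLift [Fintype X] (C : X → Y → ℝ) : ℝ :=
  sSup {r : ℝ | ∃ π : X → ℝ, (∀ x, 0 < π x) ∧ (∑ x, π x = 1) ∧ r = Lift π C}

/-- Prior g-vulnerability V_g(π) = max_w ∑_x π x * g w x. -/
noncomputable def Vg [Fintype X] [Fintype W] [Nonempty W] (g : W → X → ℝ) (π : X → ℝ) : ℝ :=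
  Finset.univ.sup' Finset.univ_nonempty fun w => ∑ x, π x * g w x

/-- Max-case posterior g-vulnerability: max over y with p(y) > 0 of V_g(δ^y). -/
noncomputable def VgMax [Fintype X] [Fintype W] [Nonempty W]
    (g : W → X → ℝ) (π : X → ℝ) (C : X → Y → ℝ) : ℝ :=
  sSup {r : ℝ | ∃ y, 0 < marginal π C y ∧
    r = Vg g (fun x => π x * C x y / marginal π C y)}

/-- Average-case posterior g-vulnerability V_g⟨π, C⟩ = ∑_y max_w ∑_x π x * C x y * g w x. -/
noncomputable def VgPost [Fintype X] [Fintype Y] [Fintype W] [Nonempty W]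
    (g : W → X → ℝ) (π : X → ℝ) (C : X → Y → ℝ) : ℝ :=
  ∑ y, Finset.univ.sup' Finset.univ_nonempty fun w => ∑ x, π x * C x y * g w x

/-- The lift capacity equals the maximum column ratio, i.e. e^ε of local DP. -/
theorem maxLift_eq_max_ratio {X Y : Type*} [Fintype X] [Nonempty X] [Fintype Y] [Nonempty Y]
    (C : X → Y → ℝ) (hCpos : ∀ x y, 0 < C x y) (hC1 : ∀ x, ∑ y, C x y = 1) :
    MaxLift C = Finset.univ.sup' Finset.univ_nonempty
      (fun p : X × X × Y => C p.1 p.2.2 / C p.2.1 p.2.2) := by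
  set M : ℝ := Finset.univ.sup' Finset.univ_nonempty
      (fun p : X × X × Y => C p.1 p.2.2 / C p.2.1 p.2.2) with hMdef
  classical
  have hMratio : ∀ x x' y, C x y / C x' y ≤ M := by
    intro x x' y
    rw [hMdef]
    exact Finset.le_sup' (fun p : X × X × Y => C p.1 p.2.2 / C p.2.1 p.2.2)
      (Finset.mem_univ (x, x', y))
  have hM0 : (0 : ℝ) ≤ M := by
    obtain ⟨x⟩ := ‹Nonempty X›
    obtain ⟨y⟩ := ‹Nonempty Y›
    have h := hMratio x x y
    rw [div_self (hCpos x y).ne'] at h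
    linarith
  -- every element of the inner set is ≤ M
  have hInner : ∀ π : X → ℝ, (∀ x, 0 < π x) → (∑ x, π x = 1) →
      ∀ r ∈ {r : ℝ | ∃ x y, 0 < π x * C x y ∧ r = C x y / marginal π C y}, r ≤ M := by
    intro π hπ hπ1 r hr
    obtain ⟨x, y, hpos, rfl⟩ := hr
    have hmar : 0 < marginal π C y :=
      Finset.sum_pos (fun x' _ => mul_pos (hπ x') (hCpos x' y)) Finset.univ_nonempty
    rw [div_le_iff₀ hmar]
    calc C x y = ∑ x', π x' * C x y := by rw [← Finset.sum_mul, hπ1, one_mul]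
      _ ≤ ∑ x', π x' * (M * C x' y) := by
          apply Finset.sum_le_sum
          intro x' _
          apply mul_le_mul_of_nonneg_left _ (hπ x').le
          exact (div_le_iff₀ (hCpos x' y)).mp (hMratio x x' y)
      _ = M * marginal π C y := by
          rw [marginal, Finset.mul_sum]
          congr 1; ext x'; ring
  have hLiftLe : ∀ π : X → ℝ, (∀ x, 0 < π x) → (∑ x, π x = 1) → Lift π C ≤ M :=
    fun π hπ hπ1 => Real.sSup_le (hInner π hπ hπ1) hM0
  have hOuterBdd : ∀ r ∈ {r : ℝ | ∃ π : X → ℝ, (∀ x, 0 < π x) ∧ (∑ x, π x = 1) ∧ r = Lift π C},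
      r ≤ M := by
    rintro r ⟨π, hπ, hπ1, rfl⟩
    exact hLiftLe π hπ hπ1
  have hUB : MaxLift C ≤ M := Real.sSup_le hOuterBdd hM0
  -- lower bound
  obtain ⟨⟨a, b, y0⟩, -, hpeq⟩ := Finset.exists_mem_eq_sup' (Finset.univ_nonempty)
      (fun p : X × X × Y => C p.1 p.2.2 / C p.2.1 p.2.2)
  have hMeq : M = C a y0 / C b y0 := hpeq
  set n : ℝ := (Fintype.card X : ℝ) with hn
  have hnpos : 0 < n := by
    rw [hn]
    exact_mod_cast Fintype.card_pos (α := X)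
  set s : ℝ := (∑ x, C x y0) / n with hs
  have hkey : ∀ ε ∈ Set.Ioo (0:ℝ) 1,
      C a y0 / ((1 - ε) * C b y0 + ε * s) ≤ MaxLift C := by
    intro ε hε
    obtain ⟨hε0, hε1⟩ := hε
    set π : X → ℝ := fun x => (1 - ε) * (if x = b then 1 else 0) + ε / n with hπdef
    have hπpos : ∀ x, 0 < π x := by
      intro x
      apply add_pos_of_nonneg_of_pos
      · apply mul_nonneg (by linarith)
        split <;> norm_num
      · exact div_pos hε0 hnpos
    have hπ1 : ∑ x, π x = 1 := by
      simp only [hπdef, Finset.sum_add_distrib, ← Finset.mul_sum,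
        Finset.sum_ite_eq' Finset.univ b (fun _ => (1:ℝ)), Finset.mem_univ, if_true,
        Finset.sum_const, Finset.card_univ, nsmul_eq_mul, ← hn]
      field_simp
      ring
    have h1 : ∑ x, (if x = b then (1:ℝ) else 0) * C x y0 = C b y0 := by
      simp [ite_mul]
    have hmar : marginal π C y0 = (1 - ε) * C b y0 + ε * s := by
      have h2 : marginal π C y0 =
          (1 - ε) * (∑ x, (if x = b then (1:ℝ) else 0) * C x y0) + ε / n * ∑ x, C x y0 := by
        simp only [marginal, hπdef]
        rw [Finset.mul_sum, Finset.mul_sum, ← Finset.sum_add_distrib]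
        congr 1; ext x; ring
      rw [h2, h1, hs]
      ring
    have hmarpos : 0 < marginal π C y0 :=
      Finset.sum_pos (fun x' _ => mul_pos (hπpos x') (hCpos x' y0)) Finset.univ_nonempty
    have hmem : C a y0 / marginal π C y0 ∈
        {r : ℝ | ∃ x y, 0 < π x * C x y ∧ r = C x y / marginal π C y} :=
      ⟨a, y0, mul_pos (hπpos a) (hCpos a y0), rfl⟩
    have hle1 : C a y0 / marginal π C y0 ≤ Lift π C :=
      le_csSup ⟨M, fun r hr => hInner π hπpos hπ1 r hr⟩ hmem
    have hle2 : Lift π C ≤ MaxLift C :=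
      le_csSup ⟨M, hOuterBdd⟩ ⟨π, hπpos, hπ1, rfl⟩
    calc C a y0 / ((1 - ε) * C b y0 + ε * s) = C a y0 / marginal π C y0 := by rw [hmar]
      _ ≤ Lift π C := hle1
      _ ≤ MaxLift C := hle2
  have hcont : ContinuousAt (fun ε : ℝ => C a y0 / ((1 - ε) * C b y0 + ε * s)) 0 := by
    apply ContinuousAt.div continuousAt_const (by fun_prop)
    simpa using (hCpos b y0).ne'
  have htend : Filter.Tendsto (fun ε : ℝ => C a y0 / ((1 - ε) * C b y0 + ε * s))
      (nhdsWithin 0 (Set.Ioo (0:ℝ) 1)) (nhds (C a y0 / C b y0)) := by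
    have h := hcont.tendsto
    simp only [sub_zero, zero_mul, one_mul, add_zero] at h
    exact h.mono_left nhdsWithin_le_nhds
  have h0cl : (0:ℝ) ∈ closure (Set.Ioo (0:ℝ) 1) := by
    rw [closure_Ioo (by norm_num : (0:ℝ) ≠ 1)]
    exact ⟨le_refl 0, zero_le_one⟩
  haveI hne : (nhdsWithin (0:ℝ) (Set.Ioo (0:ℝ) 1)).NeBot :=
    mem_closure_iff_nhdsWithin_neBot.mp h0cl
  have hLB : C a y0 / C b y0 ≤ MaxLift C :=
    le_of_tendsto htend (Filter.eventually_of_mem self_mem_nhdsWithin hkey)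
  exact le_antisymm hUB (hMeq ▸ hLB)
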